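/- Let X ∈ ℝ^{n×p} satisfy the double sparse restricted eigenvalue condition: ‖Xβ‖_2 ≥ θ‖β‖_2 for all β with at most s nonzero groups (out of m groups of size d) and at most s·s_0 nonzero entries total, where θ > 0. Suppose additionally that ‖Xv‖_2 ≤ ‖v‖_2 for every v supported on at most s_0 coordinates within a single group. Then for every β ∈ ℝ^p with W := Σ_{j=1}^m (√s_0 ‖β_{G_j}‖_2 + ‖β_{G_j}‖_1) satisfying W² ≤ (s_0(s−1)/2) θ² ‖β‖_2², it holds that ‖Xβ‖_2² ≥ (θ²/2)‖β‖_2². -/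

import Mathlib

open Finset

section MaureyGeneric
variable {α : Type*} [Fintype α] {N : ℕ}

private lemma maurey_M1 (ν c : α → ℝ) (hν : ∑ x, ν x = 1) (k : Fin N) :
    ∑ ω : Fin N → α, (∏ t, ν (ω t)) * c (ω k) = ∑ x, ν x * c x := by
  have h1 : ∀ ω : Fin N → α, (∏ t, ν (ω t)) * c (ω k)
      = ∏ t, (ν (ω t) * if t = k then c (ω t) else 1) := by
    intro ω
    rw [Finset.prod_mul_distrib, Finset.prod_ite_eq' Finset.univ k (fun t => c (ω t))]
    simp
  have h2 : ∀ t : Fin N, (∑ x, ν x * if t = k then c x else 1)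
      = if t = k then (∑ x, ν x * c x) else 1 := by
    intro t; split_ifs with h <;> simp [hν]
  calc ∑ ω : Fin N → α, (∏ t, ν (ω t)) * c (ω k)
      = ∑ ω : Fin N → α, ∏ t, (ν (ω t) * if t = k then c (ω t) else 1) :=
        Finset.sum_congr rfl (fun ω _ => h1 ω)
    _ = ∏ t, ∑ x, (ν x * if t = k then c x else 1) := by
        rw [Fintype.prod_sum (f := fun (t : Fin N) (x : α) => ν x * if t = k then c x else 1)]
    _ = ∑ x, ν x * c x := by
        rw [Finset.prod_congr rfl (fun t _ => h2 t),
          Finset.prod_ite_eq' Finset.univ k (fun _ => ∑ x, ν x * c x)]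
        simp

private lemma maurey_M2 (ν c e : α → ℝ) (hν : ∑ x, ν x = 1)
    {k k' : Fin N} (hkk : k ≠ k') :
    ∑ ω : Fin N → α, (∏ t, ν (ω t)) * (c (ω k) * e (ω k'))
      = (∑ x, ν x * c x) * (∑ x, ν x * e x) := by
  have h1 : ∀ ω : Fin N → α, (∏ t, ν (ω t)) * (c (ω k) * e (ω k'))
      = ∏ t, (ν (ω t) * ((if t = k then c (ω t) else 1) * (if t = k' then e (ω t) else 1))) := by
    intro ω
    rw [Finset.prod_mul_distrib, Finset.prod_mul_distrib,
      Finset.prod_ite_eq' Finset.univ k (fun t => c (ω t)),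
      Finset.prod_ite_eq' Finset.univ k' (fun t => e (ω t))]
    simp
  have h2 : ∀ t : Fin N, (∑ x, ν x * ((if t = k then c x else 1) * (if t = k' then e x else 1)))
      = if t = k then (∑ x, ν x * c x) else if t = k' then (∑ x, ν x * e x) else 1 := by
    intro t
    by_cases h : t = k
    · subst h; simp [hkk, hν]
    · by_cases h' : t = k' <;> simp [h, h', hν, Ne.symm hkk]
  calc ∑ ω : Fin N → α, (∏ t, ν (ω t)) * (c (ω k) * e (ω k'))
      = ∑ ω : Fin N → α, ∏ t,
          (ν (ω t) * ((if t = k then c (ω t) else 1) * (if t = k' then e (ω t) else 1))) :=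
        Finset.sum_congr rfl (fun ω _ => h1 ω)
    _ = ∏ t, ∑ x, (ν x * ((if t = k then c x else 1) * (if t = k' then e x else 1))) := by
        rw [Fintype.prod_sum (f := fun (t : Fin N) (x : α) =>
          ν x * ((if t = k then c x else 1) * (if t = k' then e x else 1)))]
    _ = (∑ x, ν x * c x) * (∑ x, ν x * e x) := by
        rw [Finset.prod_congr rfl (fun t _ => h2 t),
          ← Finset.mul_prod_erase Finset.univ _ (Finset.mem_univ k)]
        have hk' : k' ∈ Finset.univ.erase k := Finset.mem_erase.2 ⟨Ne.symm hkk, Finset.mem_univ k'⟩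
        rw [← Finset.mul_prod_erase _ _ hk']
        have h3 : ∀ t ∈ (Finset.univ.erase k).erase k',
            (if t = k then (∑ x, ν x * c x) else if t = k' then (∑ x, ν x * e x) else 1) = 1 := by
          intro t ht
          have h4 := Finset.mem_erase.1 ht
          have h5 := Finset.mem_erase.1 h4.2
          simp [h4.1, h5.1]
        rw [Finset.prod_eq_one h3]
        simp [hkk, Ne.symm hkk]

private lemma maurey_key (ν c : α → ℝ) (hν : ∑ x, ν x = 1) :
    ∑ ω : Fin N → α, (∏ t, ν (ω t)) * (∑ k, c (ω k))^2
      = (N : ℝ) * (∑ x, ν x * (c x)^2)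
        + ((N : ℝ)^2 - N) * (∑ x, ν x * c x)^2 := by
  set A : ℝ := ∑ x, ν x * (c x)^2 with hA
  set B : ℝ := ∑ x, ν x * c x with hB
  have h1 : ∀ ω : Fin N → α, (∏ t, ν (ω t)) * (∑ k, c (ω k))^2
      = ∑ k, ∑ k', (∏ t, ν (ω t)) * (c (ω k) * c (ω k')) := by
    intro ω
    rw [sq, Finset.sum_mul_sum]
    rw [Finset.mul_sum]
    exact Finset.sum_congr rfl (fun k _ => by rw [Finset.mul_sum])
  rw [Finset.sum_congr rfl (fun ω _ => h1 ω)]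
  rw [Finset.sum_comm]
  have h2 : ∀ k : Fin N, (∑ ω : Fin N → α, ∑ k', (∏ t, ν (ω t)) * (c (ω k) * c (ω k')))
      = A + ((N : ℝ) - 1) * B^2 := by
    intro k
    rw [Finset.sum_comm]
    have h3 : ∀ k' : Fin N, (∑ ω : Fin N → α, (∏ t, ν (ω t)) * (c (ω k) * c (ω k')))
        = if k' = k then A else B^2 := by
      intro k'
      by_cases h : k' = k
      · subst h
        rw [if_pos rfl, hA]
        have := maurey_M1 ν (fun x => (c x)^2) hν k'
        rw [← this]
        exact Finset.sum_congr rfl (fun ω _ => by rw [sq])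
      · rw [if_neg h, hB, sq]
        exact maurey_M2 ν c c hν (Ne.symm h)
    rw [Finset.sum_congr rfl (fun k' _ => h3 k')]
    have h4 : ∀ k' : Fin N, (if k' = k then A else B^2)
        = B^2 + (if k' = k then A - B^2 else 0) := by
      intro k'; split_ifs <;> ring
    rw [Finset.sum_congr rfl (fun k' _ => h4 k'), Finset.sum_add_distrib,
      Finset.sum_const, Finset.sum_ite_eq' Finset.univ k (fun _ => A - B^2)]
    simp [Finset.card_univ]
    ring
  rw [Finset.sum_congr rfl (fun k _ => h2 k), Finset.sum_const]
  simp [Finset.card_univ]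
  ring

private lemma maurey_outer {ι : Type*} [Fintype ι] (ν : α → ℝ)
    (hν : ∑ x, ν x = 1) (c : ι → α → ℝ) (b : ι → ℝ)
    (hb : ∀ a, ∑ x, ν x * c a x = b a) :
    ∑ ω : Fin N → α, (∏ t, ν (ω t)) * (∑ a, ((N:ℝ)⁻¹ * ∑ k, c a (ω k))^2)
      = ((N:ℝ)⁻¹)^2 * ((N:ℝ) * (∑ x, ν x * (∑ a, (c a x)^2))
          + ((N:ℝ)^2 - N) * ∑ a, (b a)^2) := by
  have h1 : ∀ ω : Fin N → α, (∏ t, ν (ω t)) * (∑ a, ((N:ℝ)⁻¹ * ∑ k, c a (ω k))^2)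
      = ∑ a, ((N:ℝ)⁻¹)^2 * ((∏ t, ν (ω t)) * (∑ k, c a (ω k))^2) := by
    intro ω
    rw [Finset.mul_sum]
    refine Finset.sum_congr rfl (fun a _ => ?_)
    rw [mul_pow]
    ring
  rw [Finset.sum_congr rfl (fun ω _ => h1 ω), Finset.sum_comm]
  have h2 : ∀ a : ι, (∑ ω : Fin N → α, ((N:ℝ)⁻¹)^2 * ((∏ t, ν (ω t)) * (∑ k, c a (ω k))^2))
      = ((N:ℝ)⁻¹)^2 * ((N:ℝ) * (∑ x, ν x * (c a x)^2) + ((N:ℝ)^2 - N) * (b a)^2) := by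
    intro a
    rw [← Finset.mul_sum, maurey_key ν (c a) hν, hb a]
  rw [Finset.sum_congr rfl (fun a _ => h2 a), ← Finset.mul_sum]
  congr 1
  rw [Finset.sum_add_distrib, ← Finset.mul_sum, ← Finset.mul_sum]
  congr 2
  rw [Finset.sum_comm]
  refine Finset.sum_congr rfl (fun x _ => ?_)
  rw [Finset.mul_sum]

end MaureyGeneric

namespace Stmt13Aux
variable {m d : ℕ} (s0 : ℕ) (β : Fin m × Fin d → ℝ)

noncomputable def mL (j : Fin m) : ℝ := ∑ i, |β (j, i)|
noncomputable def mN (j : Fin m) : ℝ := Real.sqrt (∑ i, (β (j, i))^2)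
noncomputable def mw (j : Fin m) : ℝ := Real.sqrt s0 * mN β j + ∑ i, |β (j, i)|
noncomputable def mW : ℝ := ∑ j, mw s0 β j
noncomputable def mp (j : Fin m) : ℝ := mw s0 β j / mW s0 β
noncomputable def mr (j : Fin m) (i : Fin d) : ℝ := |β (j, i)| / mL β j
noncomputable def mv (j : Fin m) (i : Fin d) : Fin m × Fin d → ℝ :=
  fun q => if q = (j, i) then β (j, i) / mr β j i else 0
noncomputable def mU (x : Fin m × (Fin s0 → Fin d)) : Fin m × Fin d → ℝ :=
  fun q => (mp s0 β x.1 * s0)⁻¹ * ∑ l, mv β x.1 (x.2 l) q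
noncomputable def mnu (x : Fin m × (Fin s0 → Fin d)) : ℝ :=
  mp s0 β x.1 * ∏ l, mr β x.1 (x.2 l)

lemma mL_nonneg (j : Fin m) : 0 ≤ mL β j := Finset.sum_nonneg (fun i _ => abs_nonneg _)

lemma mN_nonneg (j : Fin m) : 0 ≤ mN β j := Real.sqrt_nonneg _

lemma beta_zero_of_mL {j : Fin m} (h : mL β j = 0) (i : Fin d) : β (j, i) = 0 := by
  have := (Finset.sum_eq_zero_iff_of_nonneg
    (fun i _ => abs_nonneg (β (j, i)))).1 h i (Finset.mem_univ i)
  exact abs_eq_zero.1 this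

lemma mN_zero_of_mL {j : Fin m} (h : mL β j = 0) : mN β j = 0 := by
  unfold mN
  have : ∀ i : Fin d, (β (j, i))^2 = 0 := fun i => by
    rw [beta_zero_of_mL β h i]; ring
  simp [this]

lemma mw_nonneg (j : Fin m) : 0 ≤ mw s0 β j :=
  add_nonneg (mul_nonneg (Real.sqrt_nonneg _) (mN_nonneg β j)) (mL_nonneg β j)

lemma mL_zero_of_mw {j : Fin m} (h : mw s0 β j = 0) : mL β j = 0 := by
  have h1 : 0 ≤ Real.sqrt s0 * mN β j := mul_nonneg (Real.sqrt_nonneg _) (mN_nonneg β j)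
  have h2 := mL_nonneg β j
  unfold mw at h
  unfold mL at h2 ⊢
  linarith

lemma mW_nonneg : 0 ≤ mW s0 β := Finset.sum_nonneg (fun j _ => mw_nonneg s0 β j)

lemma mp_nonneg (j : Fin m) : 0 ≤ mp s0 β j :=
  div_nonneg (mw_nonneg s0 β j) (mW_nonneg s0 β)

lemma mp_zero_of_mL {j : Fin m} (h : mL β j = 0) : mp s0 β j = 0 := by
  unfold mp
  have : mw s0 β j = 0 := by
    unfold mw
    rw [mN_zero_of_mL β h]
    unfold mL at h
    rw [h]; ring
  rw [this, zero_div]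

lemma mp_ne_zero (hW : mW s0 β ≠ 0) {j : Fin m} (h : mL β j ≠ 0) : mp s0 β j ≠ 0 := by
  unfold mp
  exact div_ne_zero (fun hc => h (mL_zero_of_mw s0 β hc)) hW

lemma sum_mp (hW : mW s0 β ≠ 0) : ∑ j, mp s0 β j = 1 := by
  unfold mp
  rw [← Finset.sum_div, ← mW]
  exact div_self hW

lemma mr_nonneg (j : Fin m) (i : Fin d) : 0 ≤ mr β j i :=
  div_nonneg (abs_nonneg _) (mL_nonneg β j)

lemma sum_mr {j : Fin m} (h : mL β j ≠ 0) : ∑ i, mr β j i = 1 := by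
  unfold mr
  rw [← Finset.sum_div, ← mL]
  exact div_self h

lemma beta_zero_of_mr {j : Fin m} {i : Fin d} (hL : mL β j ≠ 0) (h : mr β j i = 0) :
    β (j, i) = 0 := by
  unfold mr at h
  rcases div_eq_zero_iff.1 h with h' | h'
  · exact abs_eq_zero.1 h'
  · exact absurd h' hL

lemma mnu_nonneg (x : Fin m × (Fin s0 → Fin d)) : 0 ≤ mnu s0 β x :=
  mul_nonneg (mp_nonneg s0 β x.1) (Finset.prod_nonneg (fun l _ => mr_nonneg β x.1 (x.2 l)))

lemma sum_mnu (hW : mW s0 β ≠ 0) : ∑ x : Fin m × (Fin s0 → Fin d), mnu s0 β x = 1 := by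
  rw [Fintype.sum_prod_type]
  have h1 : ∀ j : Fin m, (∑ c : Fin s0 → Fin d, mnu s0 β (j, c)) = mp s0 β j := by
    intro j
    unfold mnu
    show (∑ c : Fin s0 → Fin d, mp s0 β j * ∏ l, mr β j (c l)) = mp s0 β j
    rw [← Finset.mul_sum]
    by_cases h : mL β j = 0
    · rw [mp_zero_of_mL s0 β h]; ring
    · have h2 : (∑ c : Fin s0 → Fin d, ∏ l, mr β j (c l)) = 1 := by
        rw [← Fintype.prod_sum (f := fun (_ : Fin s0) (i : Fin d) => mr β j i)]
        rw [Finset.prod_congr rfl (fun l _ => sum_mr β h)]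
        simp
      rw [h2, mul_one]
  rw [Finset.sum_congr rfl (fun j _ => h1 j)]
  exact sum_mp s0 β hW

lemma sum_mr_mv {j : Fin m} (h : mL β j ≠ 0) (q : Fin m × Fin d) :
    ∑ i, mr β j i * mv β j i q = if q.1 = j then β q else 0 := by
  obtain ⟨j0, i0⟩ := q
  by_cases hj : j0 = j
  · subst hj
    simp only [if_pos rfl]
    rw [Finset.sum_eq_single i0]
    · by_cases hr : mr β j0 i0 = 0
      · rw [hr, zero_mul, beta_zero_of_mr β h hr]; simp
      · unfold mv
        rw [if_pos rfl]
        field_simp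
        simp
    · intro i _ hi
      unfold mv
      rw [if_neg (by simp [Ne.symm hi]), mul_zero]
    · intro h'; exact absurd (Finset.mem_univ i0) h'
  · simp only [if_neg hj]
    apply Finset.sum_eq_zero
    intro i _
    unfold mv
    rw [if_neg (by simp [hj]), mul_zero]

lemma mv_sq_sum (j : Fin m) (i : Fin d) :
    ∑ q, (mv β j i q)^2 = (β (j, i) / mr β j i)^2 := by
  have h : ∀ q : Fin m × Fin d, (mv β j i q)^2
      = if q = (j, i) then (β (j, i) / mr β j i)^2 else 0 := by
    intro q; unfold mv; split_ifs <;> simp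
  rw [Finset.sum_congr rfl (fun q _ => h q)]
  rw [Finset.sum_ite_eq' Finset.univ (j, i) (fun _ => (β (j, i) / mr β j i)^2)]
  simp

lemma sum_mr_mv_sq {j : Fin m} (h : mL β j ≠ 0) :
    ∑ i, mr β j i * (∑ q, (mv β j i q)^2) = (mL β j)^2 := by
  have h1 : ∀ i : Fin d, mr β j i * (∑ q, (mv β j i q)^2) = |β (j, i)| * mL β j := by
    intro i
    rw [mv_sq_sum]
    by_cases hb : β (j, i) = 0
    · rw [hb]; simp
    · have hr : mr β j i = |β (j, i)| / mL β j := rfl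
      have habs : |β (j, i)| ≠ 0 := abs_ne_zero.2 hb
      rw [hr, div_pow, div_pow, sq_abs]
      field_simp
  rw [Finset.sum_congr rfl (fun i _ => h1 i), ← Finset.sum_mul]
  rw [← mL, sq]

lemma sum_sq_restrict (j : Fin m) :
    ∑ q : Fin m × Fin d, (if q.1 = j then β q else 0)^2 = ∑ i, (β (j, i))^2 := by
  rw [Fintype.sum_prod_type]
  have h : ∀ j0 : Fin m, (∑ i, (if (j0, i).1 = j then β (j0, i) else 0)^2)
      = if j0 = j then ∑ i, (β (j, i))^2 else 0 := by
    intro j0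
    by_cases hj : j0 = j
    · subst hj; simp
    · simp [hj]
  rw [Finset.sum_congr rfl (fun j0 _ => h j0), Finset.sum_ite_eq' Finset.univ j
    (fun _ => ∑ i, (β (j, i))^2)]
  simp

lemma sum_mnu_mU (hW : mW s0 β ≠ 0) (hs0 : s0 ≠ 0) (q : Fin m × Fin d) :
    ∑ x : Fin m × (Fin s0 → Fin d), mnu s0 β x * mU s0 β x q = β q := by
  rw [Fintype.sum_prod_type]
  have claim : ∀ j : Fin m, (∑ c : Fin s0 → Fin d, mnu s0 β (j, c) * mU s0 β (j, c) q)
      = if q.1 = j then β q else 0 := by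
    intro j
    by_cases hL : mL β j = 0
    · have h0 : ∀ c : Fin s0 → Fin d, mnu s0 β (j, c) * mU s0 β (j, c) q = 0 := by
        intro c
        unfold mnu
        rw [mp_zero_of_mL s0 β hL]
        simp
      rw [Finset.sum_eq_zero (fun c _ => h0 c)]
      split_ifs with h
      · have : β q = 0 := by
          have hq : q = (j, q.2) := by rw [← h]
          rw [hq]; exact beta_zero_of_mL β hL q.2
        rw [this]
      · rfl
    · have hp : mp s0 β j ≠ 0 := mp_ne_zero s0 β hW hL
      have hterm : ∀ c : Fin s0 → Fin d, mnu s0 β (j, c) * mU s0 β (j, c) q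
          = (mp s0 β j * (mp s0 β j * s0)⁻¹)
              * ((∏ l, mr β j (c l)) * (∑ l, mv β j (c l) q)) := by
        intro c
        unfold mnu mU
        show (mp s0 β j * ∏ l, mr β j (c l)) * ((mp s0 β j * s0)⁻¹ * ∑ l, mv β j (c l) q) = _
        ring
      rw [Finset.sum_congr rfl (fun c _ => hterm c), ← Finset.mul_sum]
      have hsum : (∑ c : Fin s0 → Fin d, (∏ l, mr β j (c l)) * (∑ l, mv β j (c l) q))
          = (s0 : ℝ) * (if q.1 = j then β q else 0) := by
        have h1 : ∀ c : Fin s0 → Fin d, (∏ l, mr β j (c l)) * (∑ l, mv β j (c l) q)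
            = ∑ l, (∏ t, mr β j (c t)) * mv β j (c l) q := by
          intro c; rw [Finset.mul_sum]
        rw [Finset.sum_congr rfl (fun c _ => h1 c), Finset.sum_comm]
        have h2 : ∀ l : Fin s0, (∑ c : Fin s0 → Fin d, (∏ t, mr β j (c t)) * mv β j (c l) q)
            = if q.1 = j then β q else 0 := by
          intro l
          rw [maurey_M1 (mr β j) (fun i => mv β j i q) (sum_mr β hL) l]
          exact sum_mr_mv β hL q
        rw [Finset.sum_congr rfl (fun l _ => h2 l), Finset.sum_const]
        simp [Finset.card_univ]
      rw [hsum]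
      have hcoef : mp s0 β j * (mp s0 β j * s0)⁻¹ * ((s0 : ℝ) * (if q.1 = j then β q else 0))
          = if q.1 = j then β q else 0 := by
        have hs0' : (s0 : ℝ) ≠ 0 := Nat.cast_ne_zero.2 hs0
        split_ifs
        · field_simp
        · ring
      exact hcoef
  rw [Finset.sum_congr rfl (fun j _ => claim j)]
  rw [Finset.sum_ite_eq Finset.univ q.1 (fun _ => β q)]
  simp

lemma sum_mnu_mU_sq (hW : mW s0 β ≠ 0) (hs0 : s0 ≠ 0) :
    ∑ x : Fin m × (Fin s0 → Fin d), mnu s0 β x * (∑ q, (mU s0 β x q)^2)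
      ≤ mW s0 β ^ 2 / s0 := by
  have hs0' : (s0 : ℝ) ≠ 0 := Nat.cast_ne_zero.2 hs0
  have hs0pos : (0:ℝ) < s0 := by
    have := Nat.pos_of_ne_zero hs0; exact_mod_cast this
  rw [Fintype.sum_prod_type]
  have claim : ∀ j : Fin m,
      (∑ c : Fin s0 → Fin d, mnu s0 β (j, c) * (∑ q, (mU s0 β (j, c) q)^2))
        ≤ mw s0 β j * mW s0 β / s0 := by
    intro j
    by_cases hL : mL β j = 0
    · have h0 : ∀ c : Fin s0 → Fin d, mnu s0 β (j, c) * (∑ q, (mU s0 β (j, c) q)^2) = 0 := by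
        intro c; unfold mnu; rw [mp_zero_of_mL s0 β hL]; simp
      rw [Finset.sum_eq_zero (fun c _ => h0 c)]
      exact div_nonneg (mul_nonneg (mw_nonneg s0 β j) (mW_nonneg s0 β)) (le_of_lt hs0pos)
    · have hp : mp s0 β j ≠ 0 := mp_ne_zero s0 β hW hL
      have hwne : mw s0 β j ≠ 0 := fun h => hL (mL_zero_of_mw s0 β h)
      set C : ℝ := mp s0 β j * ((mp s0 β j * s0)⁻¹)^2 with hC
      have hterm : ∀ c : Fin s0 → Fin d, mnu s0 β (j, c) * (∑ q, (mU s0 β (j, c) q)^2)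
          = C * ((∏ l, mr β j (c l)) * (∑ q, (∑ l, mv β j (c l) q)^2)) := by
        intro c
        unfold mnu mU
        show (mp s0 β j * ∏ l, mr β j (c l))
            * (∑ q, ((mp s0 β j * s0)⁻¹ * ∑ l, mv β j (c l) q)^2) = _
        have h1 : ∀ q : Fin m × Fin d, ((mp s0 β j * s0)⁻¹ * ∑ l, mv β j (c l) q)^2
            = ((mp s0 β j * s0)⁻¹)^2 * (∑ l, mv β j (c l) q)^2 := fun q => mul_pow _ _ 2
        rw [Finset.sum_congr rfl (fun q _ => h1 q), ← Finset.mul_sum, hC]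
        ring
      rw [Finset.sum_congr rfl (fun c _ => hterm c), ← Finset.mul_sum]
      set Ssq : ℝ := ∑ i, (β (j, i))^2 with hSsq
      have hsum : (∑ c : Fin s0 → Fin d, (∏ l, mr β j (c l)) * (∑ q, (∑ l, mv β j (c l) q)^2))
          = (s0 : ℝ) * (mL β j)^2 + ((s0:ℝ)^2 - s0) * Ssq := by
        have h1 : ∀ c : Fin s0 → Fin d,
            (∏ l, mr β j (c l)) * (∑ q, (∑ l, mv β j (c l) q)^2)
              = ∑ q, (∏ t, mr β j (c t)) * (∑ l, mv β j (c l) q)^2 := by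
          intro c; rw [Finset.mul_sum]
        rw [Finset.sum_congr rfl (fun c _ => h1 c), Finset.sum_comm]
        have h2 : ∀ q : Fin m × Fin d,
            (∑ c : Fin s0 → Fin d, (∏ t, mr β j (c t)) * (∑ l, mv β j (c l) q)^2)
              = (s0:ℝ) * (∑ i, mr β j i * (mv β j i q)^2)
                + ((s0:ℝ)^2 - s0) * (∑ i, mr β j i * mv β j i q)^2 := by
          intro q
          exact maurey_key (mr β j) (fun i => mv β j i q) (sum_mr β hL)
        rw [Finset.sum_congr rfl (fun q _ => h2 q), Finset.sum_add_distrib]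
        congr 1
        · rw [← Finset.mul_sum, Finset.sum_comm]
          congr 1
          rw [← sum_mr_mv_sq β hL]
          exact Finset.sum_congr rfl (fun i _ => by rw [Finset.mul_sum])
        · rw [← Finset.mul_sum]
          congr 1
          rw [Finset.sum_congr rfl (fun q _ => by rw [sum_mr_mv β hL q]), sum_sq_restrict]
      rw [hsum]
      have hCnn : 0 ≤ C := mul_nonneg (mp_nonneg s0 β j) (sq_nonneg _)
      have hNsq : mN β j ^ 2 = Ssq := Real.sq_sqrt (Finset.sum_nonneg (fun i _ => sq_nonneg _))
      have hsqs0 : Real.sqrt s0 ^ 2 = (s0 : ℝ) := Real.sq_sqrt (le_of_lt hs0pos)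
      have hmw : mw s0 β j = Real.sqrt s0 * mN β j + mL β j := rfl
      have hSnn : 0 ≤ Ssq := Finset.sum_nonneg (fun i _ => sq_nonneg _)
      have hbound : (s0 : ℝ) * (mL β j)^2 + ((s0:ℝ)^2 - s0) * Ssq ≤ (s0:ℝ) * (mw s0 β j)^2 := by
        rw [hmw]
        have expand : (s0:ℝ) * (Real.sqrt s0 * mN β j + mL β j)^2
            = (s0:ℝ)^2 * Ssq + 2*(s0:ℝ)*(Real.sqrt s0 * mN β j * mL β j)
              + (s0:ℝ) * (mL β j)^2 := by
          have h9 : (Real.sqrt s0 * mN β j + mL β j)^2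
              = Real.sqrt s0 ^2 * (mN β j ^2) + 2*(Real.sqrt s0 * mN β j * mL β j)
                + (mL β j)^2 := by
            ring
          rw [h9, hsqs0, hNsq]; ring
        rw [expand]
        nlinarith [mul_nonneg (le_of_lt hs0pos) hSnn,
          mul_nonneg (le_of_lt hs0pos)
            (mul_nonneg (mul_nonneg (Real.sqrt_nonneg (s0:ℝ)) (mN_nonneg β j)) (mL_nonneg β j))]
      calc C * ((s0 : ℝ) * (mL β j)^2 + ((s0:ℝ)^2 - s0) * Ssq)
          ≤ C * ((s0:ℝ) * (mw s0 β j)^2) := mul_le_mul_of_nonneg_left hbound hCnn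
        _ = mw s0 β j * mW s0 β / s0 := by
            rw [hC]
            have hmp : mp s0 β j = mw s0 β j / mW s0 β := rfl
            rw [hmp]
            field_simp
  calc ∑ j : Fin m, (∑ c : Fin s0 → Fin d, mnu s0 β (j, c) * (∑ q, (mU s0 β (j, c) q)^2))
      ≤ ∑ j, mw s0 β j * mW s0 β / s0 := Finset.sum_le_sum (fun j _ => claim j)
    _ = mW s0 β ^ 2 / s0 := by
        rw [← Finset.sum_div, ← Finset.sum_mul]
        have : (∑ j, mw s0 β j) = mW s0 β := rfl
        rw [this, sq]

lemma mU_supp2 (x : Fin m × (Fin s0 → Fin d)) (q : Fin m × Fin d) (h : mU s0 β x q ≠ 0) :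
    ∃ l : Fin s0, q = (x.1, x.2 l) := by
  unfold mU at h
  have h1 : (∑ l, mv β x.1 (x.2 l) q) ≠ 0 := fun hc => h (by rw [hc, mul_zero])
  obtain ⟨l, _, hl⟩ := Finset.exists_ne_zero_of_sum_ne_zero h1
  refine ⟨l, ?_⟩
  by_contra hq
  exact hl (by unfold mv; rw [if_neg hq])

lemma mU_supp1 (x : Fin m × (Fin s0 → Fin d)) (j' : Fin m) (i : Fin d)
    (h : mU s0 β x (j', i) ≠ 0) : j' = x.1 := by
  obtain ⟨l, hl⟩ := mU_supp2 s0 β x (j', i) h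
  exact congrArg Prod.fst hl

end Stmt13Aux

private lemma stmt13_final_arith (S A1 A2 Q1 Q2 θ2 : ℝ) (hS : 2 ≤ S) (hθ2 : 0 < θ2)
    (hE : θ2 * (S * A2 + (S^2 - S) * Q2) ≤ S * A1 + (S^2 - S) * Q1)
    (hA12 : A1 ≤ A2) (hA2nn : 0 ≤ A2)
    (hA2' : A2 ≤ (S - 1) / 2 * (θ2 * Q2)) :
    θ2 / 2 * Q2 ≤ Q1 := by
  have hSpos : 0 < S := by linarith
  have hfac : 0 < S^2 - S := by nlinarith
  have t1 : 0 ≤ θ2 * (S * A2) := mul_nonneg hθ2.le (mul_nonneg hSpos.le hA2nn)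
  have t2 : S * A1 ≤ S * A2 := by nlinarith
  have t3 : S * A2 ≤ (S^2 - S)/2 * (θ2 * Q2) := by
    nlinarith [mul_le_mul_of_nonneg_left hA2' hSpos.le]
  have key : (S^2 - S) * (θ2/2 * Q2) ≤ (S^2 - S) * Q1 := by nlinarith
  exact le_of_mul_le_mul_left key hfac

open Stmt13Aux in
open Classical in
/-- If `X` satisfies the double sparse restricted eigenvalue condition with constant `θ`
and the sparse group normalization condition, then for every `β` whose mixed weight
`W = ∑_j (√s0 ‖β_{G_j}‖₂ + ‖β_{G_j}‖₁)` satisfies `W² ≤ (s0 (s-1)/2) θ² ‖β‖₂²`,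
one has `‖Xβ‖₂² ≥ (θ²/2) ‖β‖₂²`. -/
theorem stmt13 (n m d s s0 : ℕ) (hs : 2 ≤ s) (hsm : s ≤ m) (hs0 : 1 ≤ s0) (hs0d : s0 ≤ d)
    (θ : ℝ) (hθ : 0 < θ)
    (X : Matrix (Fin n) (Fin m × Fin d) ℝ)
    (hDSRE : ∀ β : Fin m × Fin d → ℝ,
      (Finset.univ.filter (fun j : Fin m => ∃ i, β (j, i) ≠ 0)).card ≤ s →
      (Finset.univ.filter (fun q : Fin m × Fin d => β q ≠ 0)).card ≤ s * s0 →
      θ^2 * ∑ q, (β q)^2 ≤ ∑ a, (X.mulVec β a)^2)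
    (hnorm : ∀ (j : Fin m) (v : Fin m × Fin d → ℝ),
      (∀ j' i, v (j', i) ≠ 0 → j' = j) →
      (Finset.univ.filter (fun q : Fin m × Fin d => v q ≠ 0)).card ≤ s0 →
      ∑ a, (X.mulVec v a)^2 ≤ ∑ q, (v q)^2)
    (β : Fin m × Fin d → ℝ)
    (hW : (∑ j, (Real.sqrt s0 * Real.sqrt (∑ i, (β (j, i))^2) + ∑ i, |β (j, i)|))^2
            ≤ ((s0 : ℝ) * ((s : ℝ) - 1) / 2) * θ^2 * ∑ q, (β q)^2) :
    θ^2 / 2 * ∑ q, (β q)^2 ≤ ∑ a, (X.mulVec β a)^2 := by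
  by_cases hWz : mW s0 β = 0
  · -- degenerate case: β = 0
    have hbz : ∀ q : Fin m × Fin d, β q = 0 := by
      intro q
      have hj : mw s0 β q.1 = 0 :=
        (Finset.sum_eq_zero_iff_of_nonneg (fun j _ => mw_nonneg s0 β j)).1 hWz q.1
          (Finset.mem_univ _)
      have hL := mL_zero_of_mw s0 β hj
      have := beta_zero_of_mL β hL q.2
      simpa using this
    have h2 : (∑ q, (β q)^2) = 0 := Finset.sum_eq_zero (fun q _ => by rw [hbz q]; ring)
    rw [h2, mul_zero]
    exact Finset.sum_nonneg (fun a _ => sq_nonneg _)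
  · have hs0ne : s0 ≠ 0 := by omega
    have hsne : s ≠ 0 := by omega
    have hν1 : ∑ x : Fin m × (Fin s0 → Fin d), mnu s0 β x = 1 := sum_mnu s0 β hWz
    have hmulVec : ∀ (v : Fin m × Fin d → ℝ) (a : Fin n),
        X.mulVec v a = ∑ q, X a q * v q := fun v a => rfl
    -- E[U] = β at the level of X
    have hb1 : ∀ a : Fin n,
        ∑ x : Fin m × (Fin s0 → Fin d), mnu s0 β x * X.mulVec (mU s0 β x) a
          = X.mulVec β a := by
      intro a
      have h1 : ∀ x : Fin m × (Fin s0 → Fin d),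
          mnu s0 β x * X.mulVec (mU s0 β x) a = ∑ q, X a q * (mnu s0 β x * mU s0 β x q) := by
        intro x
        rw [hmulVec, Finset.mul_sum]
        exact Finset.sum_congr rfl (fun q _ => by ring)
      rw [Finset.sum_congr rfl (fun x _ => h1 x), Finset.sum_comm, hmulVec]
      refine Finset.sum_congr rfl (fun q _ => ?_)
      rw [← Finset.mul_sum, sum_mnu_mU s0 β hWz hs0ne q]
    -- the two outer expectation identities
    have hE1 := maurey_outer (N := s) (mnu s0 β) hν1
      (fun (a : Fin n) x => X.mulVec (mU s0 β x) a) (X.mulVec β) hb1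
    have hE2 := maurey_outer (N := s) (mnu s0 β) hν1
      (fun (q : Fin m × Fin d) x => mU s0 β x q) β (sum_mnu_mU s0 β hWz hs0ne)
    -- pointwise DSRE for the random vector Z
    have hpt : ∀ ω : Fin s → (Fin m × (Fin s0 → Fin d)),
        θ^2 * (∑ q, ((fun q => (s:ℝ)⁻¹ * ∑ k, mU s0 β (ω k) q) q)^2)
          ≤ ∑ a, (X.mulVec (fun q => (s:ℝ)⁻¹ * ∑ k, mU s0 β (ω k) q) a)^2 := by
      intro ω
      apply hDSRE
      · -- at most s active groups
        refine le_trans (Finset.card_le_card (fun j hj => ?_))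
          (le_trans (Finset.card_image_le (s := Finset.univ)
            (f := fun k : Fin s => (ω k).1)) (by simp))
        obtain ⟨i, hne⟩ := (Finset.mem_filter.1 hj).2
        have hsum : (∑ k, mU s0 β (ω k) (j, i)) ≠ 0 := fun hc => hne (by
          show (s:ℝ)⁻¹ * ∑ k, mU s0 β (ω k) (j, i) = 0
          rw [hc, mul_zero])
        obtain ⟨k, _, hk⟩ := Finset.exists_ne_zero_of_sum_ne_zero hsum
        exact Finset.mem_image.2 ⟨k, Finset.mem_univ k, (mU_supp1 s0 β (ω k) j i hk).symm⟩
      · -- at most s*s0 active coordinates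
        refine le_trans (Finset.card_le_card (fun q hq => ?_))
          (le_trans (Finset.card_image_le (s := Finset.univ)
            (f := fun kl : Fin s × Fin s0 => ((ω kl.1).1, (ω kl.1).2 kl.2))) (by simp))
        have hne := (Finset.mem_filter.1 hq).2
        have hsum : (∑ k, mU s0 β (ω k) q) ≠ 0 := fun hc => hne (by
          show (s:ℝ)⁻¹ * ∑ k, mU s0 β (ω k) q = 0
          rw [hc, mul_zero])
        obtain ⟨k, _, hk⟩ := Finset.exists_ne_zero_of_sum_ne_zero hsum
        obtain ⟨l, hl⟩ := mU_supp2 s0 β (ω k) q hk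
        exact Finset.mem_image.2 ⟨(k, l), Finset.mem_univ _, hl.symm⟩
    -- linearity of mulVec over the average
    have hlin : ∀ (ω : Fin s → (Fin m × (Fin s0 → Fin d))) (a : Fin n),
        X.mulVec (fun q => (s:ℝ)⁻¹ * ∑ k, mU s0 β (ω k) q) a
          = (s:ℝ)⁻¹ * ∑ k, X.mulVec (mU s0 β (ω k)) a := by
      intro ω a
      rw [hmulVec]
      have h1 : ∀ q : Fin m × Fin d, X a q * ((s:ℝ)⁻¹ * ∑ k, mU s0 β (ω k) q)
          = ∑ k, (s:ℝ)⁻¹ * (X a q * mU s0 β (ω k) q) := by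
        intro q
        rw [Finset.mul_sum, Finset.mul_sum]
        exact Finset.sum_congr rfl (fun k _ => by ring)
      rw [Finset.sum_congr rfl (fun q _ => h1 q), Finset.sum_comm, Finset.mul_sum]
      refine Finset.sum_congr rfl (fun k _ => ?_)
      rw [hmulVec, Finset.mul_sum]
    -- expectation inequality from pointwise DSRE
    have hμnn : ∀ ω : Fin s → (Fin m × (Fin s0 → Fin d)), 0 ≤ ∏ k, mnu s0 β (ω k) :=
      fun ω => Finset.prod_nonneg (fun k _ => mnu_nonneg s0 β (ω k))
    have hsumpt :
        ∑ ω : Fin s → (Fin m × (Fin s0 → Fin d)),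
          (∏ k, mnu s0 β (ω k)) * (θ^2 * ∑ q, ((s:ℝ)⁻¹ * ∑ k, mU s0 β (ω k) q)^2)
        ≤ ∑ ω : Fin s → (Fin m × (Fin s0 → Fin d)),
          (∏ k, mnu s0 β (ω k)) * (∑ a, ((s:ℝ)⁻¹ * ∑ k, X.mulVec (mU s0 β (ω k)) a)^2) := by
      refine Finset.sum_le_sum (fun ω _ => mul_le_mul_of_nonneg_left ?_ (hμnn ω))
      have h := hpt ω
      calc θ^2 * ∑ q, ((s:ℝ)⁻¹ * ∑ k, mU s0 β (ω k) q)^2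
          ≤ ∑ a, (X.mulVec (fun q => (s:ℝ)⁻¹ * ∑ k, mU s0 β (ω k) q) a)^2 := h
        _ = ∑ a, ((s:ℝ)⁻¹ * ∑ k, X.mulVec (mU s0 β (ω k)) a)^2 :=
            Finset.sum_congr rfl (fun a _ => by rw [hlin ω a])
    -- pull θ^2 out of the left side
    have hLrw :
        ∑ ω : Fin s → (Fin m × (Fin s0 → Fin d)),
          (∏ k, mnu s0 β (ω k)) * (θ^2 * ∑ q, ((s:ℝ)⁻¹ * ∑ k, mU s0 β (ω k) q)^2)
        = θ^2 * ∑ ω : Fin s → (Fin m × (Fin s0 → Fin d)),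
          (∏ k, mnu s0 β (ω k)) * (∑ q, ((s:ℝ)⁻¹ * ∑ k, mU s0 β (ω k) q)^2) := by
      rw [Finset.mul_sum]
      exact Finset.sum_congr rfl (fun ω _ => by ring)
    rw [hLrw, hE2, hE1] at hsumpt
    -- abbreviations
    set Q2β : ℝ := ∑ q, (β q)^2 with hQ2def
    set Q1β : ℝ := ∑ a, (X.mulVec β a)^2 with hQ1def
    set A1 : ℝ := ∑ x : Fin m × (Fin s0 → Fin d),
      mnu s0 β x * (∑ a, (X.mulVec (mU s0 β x) a)^2) with hA1def
    set A2 : ℝ := ∑ x : Fin m × (Fin s0 → Fin d),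
      mnu s0 β x * (∑ q, (mU s0 β x q)^2) with hA2def
    have hA12 : A1 ≤ A2 := by
      refine Finset.sum_le_sum (fun x _ => mul_le_mul_of_nonneg_left ?_ (mnu_nonneg s0 β x))
      refine hnorm x.1 (mU s0 β x) (fun j' i h => mU_supp1 s0 β x j' i h) ?_
      refine le_trans (Finset.card_le_card (fun q hq => ?_))
        (le_trans (Finset.card_image_le (s := Finset.univ)
          (f := fun l : Fin s0 => (x.1, x.2 l))) (by simp))
      have hne := (Finset.mem_filter.1 hq).2
      obtain ⟨l, hl⟩ := mU_supp2 s0 β x q hne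
      exact Finset.mem_image.2 ⟨l, Finset.mem_univ l, hl.symm⟩
    have hA2nn : 0 ≤ A2 :=
      Finset.sum_nonneg (fun x _ => mul_nonneg (mnu_nonneg s0 β x)
        (Finset.sum_nonneg (fun q _ => sq_nonneg _)))
    have hA2W : A2 ≤ mW s0 β ^ 2 / s0 := sum_mnu_mU_sq s0 β hWz hs0ne
    have hWeq : mW s0 β
        = ∑ j, (Real.sqrt s0 * Real.sqrt (∑ i, (β (j, i))^2) + ∑ i, |β (j, i)|) := rfl
    have hWbd : mW s0 β ^ 2 ≤ ((s0 : ℝ) * ((s : ℝ) - 1) / 2) * θ^2 * Q2β := by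
      rw [hWeq]; exact hW
    -- final arithmetic
    have hS2 : (2:ℝ) ≤ (s:ℝ) := by exact_mod_cast hs
    have hSpos : (0:ℝ) < (s:ℝ) := by linarith
    have hs0pos : (0:ℝ) < (s0:ℝ) := by
      have := Nat.pos_of_ne_zero hs0ne; exact_mod_cast this
    have hQ2nn : 0 ≤ Q2β := Finset.sum_nonneg (fun q _ => sq_nonneg _)
    have hinv2pos : (0:ℝ) < ((s:ℝ)⁻¹)^2 := by positivity
    -- from hsumpt: θ² (s A2 + (s²-s) Q2β) ≤ s A1 + (s²-s) Q1β
    have hE : θ^2 * ((s:ℝ) * A2 + ((s:ℝ)^2 - s) * Q2β)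
        ≤ (s:ℝ) * A1 + ((s:ℝ)^2 - s) * Q1β := by
      have h' : ((s:ℝ)⁻¹)^2 * (θ^2 * ((s:ℝ) * A2 + ((s:ℝ)^2 - s) * Q2β))
          ≤ ((s:ℝ)⁻¹)^2 * ((s:ℝ) * A1 + ((s:ℝ)^2 - s) * Q1β) := by
        calc ((s:ℝ)⁻¹)^2 * (θ^2 * ((s:ℝ) * A2 + ((s:ℝ)^2 - s) * Q2β))
            = θ^2 * (((s:ℝ)⁻¹)^2 * ((s:ℝ) * A2 + ((s:ℝ)^2 - s) * Q2β)) := by ring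
          _ ≤ ((s:ℝ)⁻¹)^2 * ((s:ℝ) * A1 + ((s:ℝ)^2 - s) * Q1β) := hsumpt
      exact le_of_mul_le_mul_left (by linarith [h']) hinv2pos
    have hA2' : A2 ≤ ((s:ℝ) - 1) / 2 * (θ^2 * Q2β) := by
      have h1 : mW s0 β ^ 2 / s0 ≤ (((s0 : ℝ) * ((s : ℝ) - 1) / 2) * θ^2 * Q2β) / s0 := by
        gcongr
      have h2 : (((s0 : ℝ) * ((s : ℝ) - 1) / 2) * θ^2 * Q2β) / s0
          = ((s:ℝ) - 1) / 2 * (θ^2 * Q2β) := by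
        field_simp
      linarith [hA2W, h1, h2.symm.le, h2.le]
    have hθ2pos : (0:ℝ) < θ^2 := by positivity
    exact stmt13_final_arith (s:ℝ) A1 A2 Q1β Q2β (θ^2) hS2 hθ2pos hE hA12 hA2nn hA2'
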